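/- Let μ be a positive integer and let p ∈ V_μ. Then W1(p, δ_μ) ≤ 2 μ G[p], where δ_μ is the Dirac distribution on ℕ concentrated at μ. (Note that when μ is a positive integer, the shifted Bernoulli distribution p* equals δ_μ and G[p*] = 0, so this reads W1(p, p*) ≤ 2μ (G[p] − G[p*]).) -/

import Mathlib

/-- Cumulative distribution function of a pmf on ℕ: `F n = ∑_{m ≤ n} p m`. -/
noncomputable def cdf (p : ℕ → ℝ) (n : ℕ) : ℝ := ∑ m ∈ Finset.range (n + 1), p m

/-- Wasserstein-1 distance between two pmfs on ℕ, `W1(p,q) = ∑_{n ≥ 0} |F_n - H_n|`. -/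
noncomputable def W1 (p q : ℕ → ℝ) : ℝ := ∑' n : ℕ, |cdf p n - cdf q n|

/-- Gini index of a pmf on ℕ with mean μ: `G[p] = (1/(2μ)) ∑_i ∑_j |i-j| p_i p_j`. -/
noncomputable def Gini (μ : ℝ) (p : ℕ → ℝ) : ℝ :=
  (1 / (2 * μ)) * ∑' i : ℕ, ∑' j : ℕ, |(i : ℝ) - (j : ℝ)| * p i * p j

/-- The shifted Bernoulli distribution with mean μ:
`p*_{⌊μ⌋} = 1 - μ + ⌊μ⌋`, `p*_{⌊μ⌋+1} = μ - ⌊μ⌋`, `p*_n = 0` otherwise. -/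
noncomputable def pstar (μ : ℝ) : ℕ → ℝ := fun n =>
  if n = ⌊μ⌋₊ then 1 - μ + (⌊μ⌋₊ : ℝ)
  else if n = ⌊μ⌋₊ + 1 then μ - (⌊μ⌋₊ : ℝ)
  else 0

/-- The Dirac distribution on ℕ concentrated at `k`. -/
noncomputable def dirac (k : ℕ) : ℕ → ℝ := fun n => if n = k then 1 else 0

private lemma pos_part_eq (x : ℝ) : max x 0 = x + max (-x) 0 := by
  rcases le_total x 0 with h | h
  · rw [max_eq_right h, max_eq_left (by linarith)]; ring
  · rw [max_eq_left h, max_eq_right (by linarith)]; ring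

private lemma abs_eq_pos_parts (x : ℝ) : |x| = max x 0 + max (-x) 0 := by
  rcases le_total x 0 with h | h
  · rw [abs_of_nonpos h, max_eq_right h, max_eq_left (by linarith)]; ring
  · rw [abs_of_nonneg h, max_eq_left h, max_eq_right (by linarith)]; ring

private lemma fubini_fin (p : ℕ → ℝ) (K : ℕ) :
    ∑ n ∈ Finset.range K, ∑ m ∈ Finset.range (n + 1), p m
      = ∑ m ∈ Finset.range K, ((K : ℝ) - m) * p m := by
  induction K with
  | zero => simp
  | succ K ih =>
    rw [Finset.sum_range_succ, ih]
    have h1 : ∑ m ∈ Finset.range K, ((K : ℝ) - m) * p m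
        = ∑ m ∈ Finset.range (K + 1), ((K : ℝ) - m) * p m := by
      rw [Finset.sum_range_succ]; simp
    rw [h1, ← Finset.sum_add_distrib]
    refine Finset.sum_congr rfl fun m hm => ?_
    push_cast
    ring

theorem stmt_0 (μ : ℕ) (hμ : 0 < μ) (p : ℕ → ℝ)
    (hpos : ∀ n, 0 ≤ p n) (hsum : HasSum p 1)
    (hmean : HasSum (fun n : ℕ => (n : ℝ) * p n) (μ : ℝ)) :
    W1 p (dirac μ) ≤ 2 * (μ : ℝ) * Gini (μ : ℝ) p := by
  set A : ℝ := ∑ m ∈ Finset.range μ, ((μ : ℝ) - m) * p m with hA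
  -- basic facts about the cdf
  have hF0 : ∀ n, 0 ≤ cdf p n := fun n =>
    Finset.sum_nonneg fun m _ => hpos m
  have hF1 : ∀ n, cdf p n ≤ 1 := by
    intro n
    have := Summable.sum_le_tsum (Finset.range (n + 1)) (fun i _ => hpos i) hsum.summable
    rwa [hsum.tsum_eq] at this
  have hH : ∀ n, cdf (dirac μ) n = if μ ≤ n then 1 else 0 := by
    intro n
    unfold cdf dirac
    rw [Finset.sum_ite_eq' (Finset.range (n + 1)) μ (fun _ => (1 : ℝ))]
    simp [Nat.lt_succ_iff]
  -- tail sums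
  have hgsum : ∀ n, HasSum (fun j => if n < j then p j else 0) (1 - cdf p n) := by
    intro n
    have h1 : HasSum (fun j => if j ≤ n then p j else 0) (cdf p n) := by
      have h2 : ∀ b ∉ Finset.range (n + 1), (if b ≤ n then p b else 0) = 0 := by
        intro b hb
        rw [if_neg (by simpa [Nat.lt_succ_iff] using hb)]
      have := hasSum_sum_of_ne_finset_zero (L := SummationFilter.unconditional ℕ) h2
      have h3 : ∑ b ∈ Finset.range (n + 1), (if b ≤ n then p b else 0) = cdf p n := by
        refine Finset.sum_congr rfl fun m hm => ?_
        rw [if_pos (Nat.lt_succ_iff.mp (Finset.mem_range.mp hm))]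
      rwa [h3] at this
    have := hsum.sub h1
    convert this using 2 with j
    · rfl
    by_cases hj : j ≤ n
    · simp [hj, Nat.not_lt.mpr hj]
    · simp [hj, Nat.lt_of_not_le hj]
  -- the mean identity
  have hmean0 : HasSum (fun j : ℕ => ((j : ℝ) - μ) * p j) 0 := by
    have := hmean.sub (hsum.mul_left (μ : ℝ))
    simp only [mul_one] at this
    convert this using 2 with j
    · rfl
    · ring
    · ring
  have hneg : HasSum (fun j : ℕ => max ((μ : ℝ) - j) 0 * p j) A := by
    have h2 : ∀ b ∉ Finset.range μ, max ((μ : ℝ) - b) 0 * p b = 0 := by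
      intro b hb
      have : (μ : ℝ) - b ≤ 0 := by
        have : μ ≤ b := by simpa using hb
        have := Nat.cast_le (α := ℝ).mpr this
        linarith
      rw [max_eq_right this, zero_mul]
    have := hasSum_sum_of_ne_finset_zero (L := SummationFilter.unconditional ℕ) h2
    have h3 : ∑ b ∈ Finset.range μ, max ((μ : ℝ) - b) 0 * p b = A := by
      refine Finset.sum_congr rfl fun m hm => ?_
      have : (m : ℝ) < μ := by exact_mod_cast Finset.mem_range.mp hm
      rw [max_eq_left (by linarith)]
    rwa [h3] at this
  have hposA : HasSum (fun j : ℕ => max ((j : ℝ) - μ) 0 * p j) A := by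
    have h := hmean0.add hneg
    rw [zero_add] at h
    convert h using 2 with j
    rw [pos_part_eq ((j : ℝ) - μ)]
    have : -((j : ℝ) - μ) = (μ : ℝ) - j := by ring
    rw [this]
    ring
  have habs : HasSum (fun j : ℕ => |(j : ℝ) - μ| * p j) (A + A) := by
    have h := hposA.add hneg
    convert h using 2 with j
    rw [abs_eq_pos_parts ((j : ℝ) - μ)]
    have : -((j : ℝ) - μ) = (μ : ℝ) - j := by ring
    rw [this]
    ring
  -- Part 1 : sum over range μ
  have hpart1 : ∑ n ∈ Finset.range μ, |cdf p n - cdf (dirac μ) n| = A := by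
    have h1 : ∀ n ∈ Finset.range μ, |cdf p n - cdf (dirac μ) n| = cdf p n := by
      intro n hn
      rw [hH n, if_neg (Nat.not_le.mpr (Finset.mem_range.mp hn)), sub_zero,
        abs_of_nonneg (hF0 n)]
    rw [Finset.sum_congr rfl h1]
    exact fubini_fin p μ
  -- Part 2 : sum over Ico μ M
  have hpart2 : ∀ M, ∑ n ∈ Finset.Ico μ M, |cdf p n - cdf (dirac μ) n| ≤ A := by
    intro M
    have h1 : ∀ n ∈ Finset.Ico μ M, |cdf p n - cdf (dirac μ) n| = 1 - cdf p n := by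
      intro n hn
      rw [hH n, if_pos (Finset.mem_Ico.mp hn).1, abs_of_nonpos (by linarith [hF1 n])]
      ring
    rw [Finset.sum_congr rfl h1]
    have h2 : ∀ n ∈ Finset.Ico μ M, (1 - cdf p n) = ∑' j : ℕ, if n < j then p j else 0 :=
      fun n _ => ((hgsum n).tsum_eq).symm
    rw [Finset.sum_congr rfl h2]
    have hsummable : ∀ n ∈ Finset.Ico μ M, Summable (fun j => if n < j then p j else 0) :=
      fun n _ => (hgsum n).summable
    rw [← Summable.tsum_finsetSum hsummable]
    have hterm : ∀ j : ℕ, (∑ n ∈ Finset.Ico μ M, if n < j then p j else 0)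
        ≤ max ((j : ℝ) - μ) 0 * p j := by
      intro j
      rw [← Finset.sum_filter]
      rw [Finset.sum_const, nsmul_eq_mul]
      have hcard : ((Finset.Ico μ M).filter (fun n => n < j)).card ≤ j - μ := by
        have hsub : (Finset.Ico μ M).filter (fun n => n < j) ⊆ Finset.Ico μ j := by
          intro n hn
          rw [Finset.mem_filter, Finset.mem_Ico] at hn
          exact Finset.mem_Ico.mpr ⟨hn.1.1, hn.2⟩
        calc ((Finset.Ico μ M).filter (fun n => n < j)).card
            ≤ (Finset.Ico μ j).card := Finset.card_le_card hsub
          _ = j - μ := Nat.card_Ico μ j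
      have hcast : (((Finset.Ico μ M).filter (fun n => n < j)).card : ℝ)
          ≤ max ((j : ℝ) - μ) 0 := by
        rcases le_total μ j with h | h
        · calc (((Finset.Ico μ M).filter (fun n => n < j)).card : ℝ)
              ≤ ((j - μ : ℕ) : ℝ) := by exact_mod_cast hcard
            _ = (j : ℝ) - μ := by push_cast [Nat.cast_sub h]; ring
            _ ≤ max ((j : ℝ) - μ) 0 := le_max_left _ _
        · have : j - μ = 0 := Nat.sub_eq_zero_of_le h
          have h0 : ((Finset.Ico μ M).filter (fun n => n < j)).card = 0 := by omega
          rw [h0]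
          simp [le_max_right]
      exact mul_le_mul_of_nonneg_right hcast (hpos j)
    have hL : Summable (fun j => ∑ n ∈ Finset.Ico μ M, if n < j then p j else 0) :=
      summable_sum fun n _ => (hgsum n).summable
    calc (∑' j : ℕ, ∑ n ∈ Finset.Ico μ M, if n < j then p j else 0)
        ≤ ∑' j : ℕ, max ((j : ℝ) - μ) 0 * p j := Summable.tsum_le_tsum hterm hL hposA.summable
      _ = A := hposA.tsum_eq
  -- partial sums of W1 are bounded by A + A
  have hpartial : ∀ N, ∑ n ∈ Finset.range N, |cdf p n - cdf (dirac μ) n| ≤ A + A := by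
    intro N
    set M := max N μ with hM
    have hNM : Finset.range N ⊆ Finset.range M :=
      Finset.range_subset_range.mpr (le_max_left N μ)
    have h1 : ∑ n ∈ Finset.range N, |cdf p n - cdf (dirac μ) n|
        ≤ ∑ n ∈ Finset.range M, |cdf p n - cdf (dirac μ) n| :=
      Finset.sum_le_sum_of_subset_of_nonneg hNM fun n _ _ => abs_nonneg _
    have h2 : ∑ n ∈ Finset.range M, |cdf p n - cdf (dirac μ) n|
        = ∑ n ∈ Finset.range μ, |cdf p n - cdf (dirac μ) n|
          + ∑ n ∈ Finset.Ico μ M, |cdf p n - cdf (dirac μ) n| := by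
      rw [Finset.range_eq_Ico, Finset.range_eq_Ico,
        ← Finset.sum_Ico_consecutive _ (Nat.zero_le μ) (le_max_right N μ)]
    calc ∑ n ∈ Finset.range N, |cdf p n - cdf (dirac μ) n|
        ≤ ∑ n ∈ Finset.range M, |cdf p n - cdf (dirac μ) n| := h1
      _ = _ := h2
      _ ≤ A + A := add_le_add (le_of_eq hpart1) (hpart2 M)
  -- now the Gini side
  set inner : ℕ → ℝ := fun i => ∑' j : ℕ, |(i : ℝ) - (j : ℝ)| * p i * p j with hinner
  have hsum_ij : ∀ i : ℕ, HasSum (fun j : ℕ => ((i : ℝ) - j) * p j) ((i : ℝ) - μ) := by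
    intro i
    have := (hsum.mul_left (i : ℝ)).sub hmean
    rw [mul_one] at this
    convert this using 2 with j
    · rfl
    ring
  have hsumabs : ∀ i : ℕ, Summable (fun j : ℕ => |(i : ℝ) - j| * p j) := by
    intro i
    have h := (hsum_ij i).summable.abs
    have he : (fun j : ℕ => |(i : ℝ) - j| * p j) = fun j : ℕ => |((i : ℝ) - j) * p j| := by
      funext j
      rw [abs_mul, abs_of_nonneg (hpos j)]
    rw [he]
    exact h
  have hinner_eq : ∀ i, inner i = p i * ∑' j : ℕ, |(i : ℝ) - j| * p j := by
    intro i
    rw [hinner]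
    simp only
    rw [← tsum_mul_left]
    exact tsum_congr fun j => by ring
  have hsum_ipj : ∀ i : ℕ, HasSum (fun j : ℕ => ((i : ℝ) + j) * p j) ((i : ℝ) + μ) := by
    intro i
    have := (hsum.mul_left (i : ℝ)).add hmean
    rw [mul_one] at this
    convert this using 2 with j
    · rfl
    ring
  have hlow : ∀ i, p i * |(i : ℝ) - μ| ≤ inner i := by
    intro i
    rw [hinner_eq i]
    refine mul_le_mul_of_nonneg_left ?_ (hpos i)
    have h1 : |(i : ℝ) - μ| = |∑' j : ℕ, ((i : ℝ) - j) * p j| := by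
      rw [(hsum_ij i).tsum_eq]
    rw [h1]
    have h2 := norm_tsum_le_tsum_norm (f := fun j : ℕ => ((i : ℝ) - j) * p j)
      (by simpa only [Real.norm_eq_abs] using (hsum_ij i).summable.abs)
    simp only [Real.norm_eq_abs] at h2
    calc |∑' j : ℕ, ((i : ℝ) - j) * p j| ≤ ∑' j : ℕ, |((i : ℝ) - j) * p j| := h2
      _ = ∑' j : ℕ, |(i : ℝ) - j| * p j :=
        tsum_congr fun j => by rw [abs_mul, abs_of_nonneg (hpos j)]
  have hup : ∀ i, inner i ≤ (i : ℝ) * p i + (μ : ℝ) * p i := by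
    intro i
    rw [hinner_eq i]
    have h1 : (∑' j : ℕ, |(i : ℝ) - j| * p j) ≤ (i : ℝ) + μ := by
      have hb : ∀ j : ℕ, |(i : ℝ) - j| * p j ≤ ((i : ℝ) + j) * p j := by
        intro j
        refine mul_le_mul_of_nonneg_right ?_ (hpos j)
        calc |(i : ℝ) - j| ≤ |(i : ℝ)| + |(j : ℝ)| := abs_sub _ _
          _ = (i : ℝ) + j := by
            rw [abs_of_nonneg (Nat.cast_nonneg i), abs_of_nonneg (Nat.cast_nonneg j)]
      calc (∑' j : ℕ, |(i : ℝ) - j| * p j) ≤ ∑' j : ℕ, ((i : ℝ) + j) * p j :=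
          Summable.tsum_le_tsum hb (hsumabs i) (hsum_ipj i).summable
        _ = (i : ℝ) + μ := (hsum_ipj i).tsum_eq
    calc p i * (∑' j : ℕ, |(i : ℝ) - j| * p j) ≤ p i * ((i : ℝ) + μ) :=
        mul_le_mul_of_nonneg_left h1 (hpos i)
      _ = (i : ℝ) * p i + (μ : ℝ) * p i := by ring
  have hinner_nonneg : ∀ i, 0 ≤ inner i :=
    fun i => le_trans (mul_nonneg (hpos i) (abs_nonneg _)) (hlow i)
  have hdom : Summable (fun i : ℕ => (i : ℝ) * p i + (μ : ℝ) * p i) :=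
    hmean.summable.add (hsum.summable.mul_left (μ : ℝ))
  have hinner_summable : Summable inner :=
    Summable.of_nonneg_of_le hinner_nonneg hup hdom
  have hf_summable : Summable (fun i : ℕ => p i * |(i : ℝ) - μ|) := by
    have := habs.summable
    apply Summable.of_nonneg_of_le (fun i => mul_nonneg (hpos i) (abs_nonneg _))
      (fun i => le_of_eq (mul_comm _ _)) this
  have hST : (∑' i, p i * |(i : ℝ) - μ|) ≤ ∑' i, inner i :=
    Summable.tsum_le_tsum hlow hf_summable hinner_summable
  have hS : (∑' i : ℕ, p i * |(i : ℝ) - μ|) = A + A := by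
    rw [← habs.tsum_eq]
    exact tsum_congr fun i => mul_comm _ _
  have hμ' : (μ : ℝ) ≠ 0 := Nat.cast_ne_zero.mpr hμ.ne'
  have hT : 2 * (μ : ℝ) * Gini (μ : ℝ) p = ∑' i, inner i := by
    unfold Gini
    rw [hinner]
    field_simp
  -- conclusion
  have hfinal : A + A ≤ 2 * (μ : ℝ) * Gini (μ : ℝ) p := by
    rw [hT, ← hS]
    exact hST
  unfold W1
  by_cases hW : Summable (fun n => |cdf p n - cdf (dirac μ) n|)
  · exact le_trans (Summable.tsum_le_of_sum_range_le hW hpartial) hfinal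
  · rw [tsum_eq_zero_of_not_summable hW]
    refine le_trans ?_ hfinal
    have : (0 : ℝ) ≤ A := by
      refine Finset.sum_nonneg fun m hm => mul_nonneg ?_ (hpos m)
      have : (m : ℝ) < μ := by exact_mod_cast Finset.mem_range.mp hm
      linarith
    linarith
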